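/- arXiv:1509.01225 — 8 statements merged into one kernel-verified Lean document; each statement's English description precedes it below -/
import Mathlib

section
/- There exist positive constants K1, K2 such that for all ε1≥0 and ε2>0, writing r=√(ε1²+ε2²), one has K1/r ≤ (F(ε1/ε2)−P)/ε2 ≤ K2/r. -/
/-- The pay-off `F(ρ) = (Pρ² + (S+T)ρ + R)/(1+ρ)²` of ATFT against itself. -/
noncomputable def F (P S T R ρ : ℝ) : ℝ := (P * ρ ^ 2 + (S + T) * ρ + R) / (1 + ρ) ^ 2

theorem stmt_1 (T R P S : ℝ) (hTR : T > R) (hRP : R > P) (hPS : P > S)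
    (hlow : P < (S + T) / 2) (hup : (S + T) / 2 < R) :
    ∃ K1 K2 : ℝ, 0 < K1 ∧ 0 < K2 ∧
      ∀ ε1 ε2 : ℝ, 0 ≤ ε1 → 0 < ε2 →
        K1 / Real.sqrt (ε1 ^ 2 + ε2 ^ 2) ≤ (F P S T R (ε1 / ε2) - P) / ε2 ∧
        (F P S T R (ε1 / ε2) - P) / ε2 ≤ K2 / Real.sqrt (ε1 ^ 2 + ε2 ^ 2) := by
  have ha : 0 < S + T - 2 * P := by linarith
  have hb : 0 < R - P := by linarith
  set a := S + T - 2 * P with ha'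
  set b := R - P with hb'
  have hc : 0 < min a b := lt_min ha hb
  refine ⟨min a b / 2, a + b, by positivity, by linarith, ?_⟩
  intro ε1 ε2 h1 h2
  have hs : 0 < ε1 + ε2 := by linarith
  have hr2 : 0 < ε1 ^ 2 + ε2 ^ 2 := by positivity
  have hr : 0 < Real.sqrt (ε1 ^ 2 + ε2 ^ 2) := Real.sqrt_pos.2 hr2
  have hrsq : Real.sqrt (ε1 ^ 2 + ε2 ^ 2) ^ 2 = ε1 ^ 2 + ε2 ^ 2 := Real.sq_sqrt hr2.le
  have hrs : Real.sqrt (ε1 ^ 2 + ε2 ^ 2) ≤ ε1 + ε2 := by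
    nlinarith [sq_nonneg (ε1 - ε2), mul_nonneg h1 h2.le]
  have hsr : ε1 + ε2 ≤ 2 * Real.sqrt (ε1 ^ 2 + ε2 ^ 2) := by
    nlinarith [sq_nonneg (ε1 - ε2)]
  have hE : (F P S T R (ε1 / ε2) - P) / ε2 = (a * ε1 + b * ε2) / (ε1 + ε2) ^ 2 := by
    unfold F
    rw [ha', hb']
    field_simp
    ring
  rw [hE]
  constructor
  · rw [div_le_div_iff₀ hr (by positivity)]
    have hcs : min a b * (ε1 + ε2) ≤ a * ε1 + b * ε2 := by
      nlinarith [mul_le_mul_of_nonneg_right (min_le_left a b) h1,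
        mul_le_mul_of_nonneg_right (min_le_right a b) h2.le]
    have h5 : 0 ≤ a * ε1 + b * ε2 :=
      add_nonneg (mul_nonneg ha.le h1) (mul_nonneg hb.le h2.le)
    calc min a b / 2 * (ε1 + ε2) ^ 2
        = min a b * (ε1 + ε2) * ((ε1 + ε2) / 2) := by ring
      _ ≤ (a * ε1 + b * ε2) * ((ε1 + ε2) / 2) :=
          mul_le_mul_of_nonneg_right hcs (by positivity)
      _ ≤ (a * ε1 + b * ε2) * Real.sqrt (ε1 ^ 2 + ε2 ^ 2) :=
          mul_le_mul_of_nonneg_left (by linarith) h5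
  · rw [div_le_div_iff₀ (by positivity) hr]
    have h5 : 0 ≤ a * ε1 + b * ε2 :=
      add_nonneg (mul_nonneg ha.le h1) (mul_nonneg hb.le h2.le)
    have := mul_le_mul_of_nonneg_left hrs h5
    nlinarith [mul_nonneg (mul_nonneg ha.le h2.le) hs.le,
      mul_nonneg (mul_nonneg hb.le h1) hs.le]
end

section
/- There exist positive constants K3, K4 such that for all ε1>0 and ε2>0, writing r=√(ε1²+ε2²), one has K3/r ≤ (R−F(ε1/ε2))/ε1 ≤ K4/r. -/
theorem stmt_2 (T R P S : ℝ) (hTR : T > R) (hRP : R > P) (hPS : P > S)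
    (hlow : P < (S + T) / 2) (hup : (S + T) / 2 < R) :
    ∃ K3 K4 : ℝ, 0 < K3 ∧ 0 < K4 ∧
      ∀ ε1 ε2 : ℝ, 0 < ε1 → 0 < ε2 →
        K3 / Real.sqrt (ε1 ^ 2 + ε2 ^ 2) ≤ (R - F P S T R (ε1 / ε2)) / ε1 ∧
        (R - F P S T R (ε1 / ε2)) / ε1 ≤ K4 / Real.sqrt (ε1 ^ 2 + ε2 ^ 2) := by
  set a : ℝ := R - P with ha
  set b : ℝ := 2 * R - S - T with hb
  have hapos : 0 < a := by simp [ha]; linarith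
  have hbpos : 0 < b := by simp [hb]; linarith
  refine ⟨min a b / 2, max a b, by positivity, by positivity, ?_⟩
  intro ε1 ε2 h1 h2
  have hs2 : Real.sqrt (ε1 ^ 2 + ε2 ^ 2) ^ 2 = ε1 ^ 2 + ε2 ^ 2 :=
    Real.sq_sqrt (by positivity)
  set s : ℝ := Real.sqrt (ε1 ^ 2 + ε2 ^ 2) with hsdef
  have hspos : 0 < s := Real.sqrt_pos.mpr (by positivity)
  have hkey : (R - F P S T R (ε1 / ε2)) / ε1 = (a * ε1 + b * ε2) / (ε1 + ε2) ^ 2 := by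
    have hne2 : ε2 ≠ 0 := ne_of_gt h2
    have hne1 : ε1 ≠ 0 := ne_of_gt h1
    have hden : 1 + ε1 / ε2 ≠ 0 := by positivity
    have hsum : ε1 + ε2 ≠ 0 := by positivity
    rw [F, ha, hb]
    field_simp
    ring
  rw [hkey]
  -- s ≤ ε1 + ε2
  have hsle : s ≤ ε1 + ε2 := by
    rw [hsdef]
    calc Real.sqrt (ε1 ^ 2 + ε2 ^ 2) ≤ Real.sqrt ((ε1 + ε2) ^ 2) := by
          apply Real.sqrt_le_sqrt; nlinarith
      _ = ε1 + ε2 := Real.sqrt_sq (by positivity)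
  -- ε1 + ε2 ≤ 2 * s
  have hle2s : ε1 + ε2 ≤ 2 * s := by
    nlinarith [hs2, hspos, sq_nonneg (ε1 - ε2)]
  have hsumpos : 0 < (ε1 + ε2) ^ 2 := by positivity
  have hmin1 : min a b ≤ a := min_le_left a b
  have hmin2 : min a b ≤ b := min_le_right a b
  have hmax1 : a ≤ max a b := le_max_left a b
  have hmax2 : b ≤ max a b := le_max_right a b
  have hminpos : 0 < min a b := lt_min hapos hbpos
  constructor
  · rw [div_le_div_iff₀ hspos hsumpos]
    have hm : min a b * (ε1 + ε2) ≤ a * ε1 + b * ε2 := by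
      nlinarith [mul_le_mul_of_nonneg_right hmin1 (le_of_lt h1),
        mul_le_mul_of_nonneg_right hmin2 (le_of_lt h2)]
    calc min a b / 2 * (ε1 + ε2) ^ 2
        = min a b * (ε1 + ε2) * (ε1 + ε2) / 2 := by ring
      _ ≤ min a b * (ε1 + ε2) * (2 * s) / 2 := by
          have := mul_le_mul_of_nonneg_left hle2s
            (mul_nonneg hminpos.le (add_pos h1 h2).le)
          linarith
      _ = min a b * (ε1 + ε2) * s := by ring
      _ ≤ (a * ε1 + b * ε2) * s := mul_le_mul_of_nonneg_right hm hspos.le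
  · rw [div_le_div_iff₀ hsumpos hspos]
    nlinarith [mul_le_mul_of_nonneg_right hmax1 (le_of_lt h1),
      mul_le_mul_of_nonneg_right hmax2 (le_of_lt h2),
      mul_le_mul_of_nonneg_left hsle (le_of_lt (add_pos h1 h2))]
end

section
/- For all ε1,ε2>0 with ε1+ε2<1 and all q∈[0,1], a13(q) − a31(q) = ε1(T−S)q/(q+(1−q)(ε1+ε2)); consequently a13(q) > a31(q) for every q∈(0,1], and the function q ↦ a13(q) − a31(q) is strictly increasing on [0,1]. -/
/-- The pay-off `a13(q)` of ATFT against the generous strategy G = r(1,q). -/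
noncomputable def a13 (T R P S ε1 ε2 q : ℝ) : ℝ :=
  ((R - T) + (P - S)) * ε1 ^ 2 * (1 - q) / (q + (1 - q) * (ε1 + ε2)) ^ 2
    - (ε1 / (q + (1 - q) * (ε1 + ε2))) *
        ((2 * R - S - T + (T - R) * (ε1 + ε2)) / (1 - ε1 - ε2))
    + (R * (1 - ε2) - ε1 * S) / (1 - ε1 - ε2)

/-- The pay-off `a31(q)` of the generous strategy G = r(1,q) against ATFT. -/
noncomputable def a31 (T R P S ε1 ε2 q : ℝ) : ℝ :=
  ((R - T) + (P - S)) * ε1 ^ 2 / ((1 - ε1 - ε2) * (q + (1 - q) * (ε1 + ε2)) ^ 2)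
    - (ε1 / (q + (1 - q) * (ε1 + ε2))) *
        ((2 * R - S - T - (ε1 * (T - P) + ε2 * (R - S))) / (1 - ε1 - ε2))
    + (R * (1 - ε2) - ε1 * T) / (1 - ε1 - ε2)

theorem stmt_3 (T R P S : ℝ) (hTR : T > R) (hRP : R > P) (hPS : P > S)
    (hlow : P < (S + T) / 2) (hup : (S + T) / 2 < R)
    (ε1 ε2 : ℝ) (hε1 : 0 < ε1) (hε2 : 0 < ε2) (hsum : ε1 + ε2 < 1) :
    (∀ q ∈ Set.Icc (0 : ℝ) 1,
      a13 T R P S ε1 ε2 q - a31 T R P S ε1 ε2 q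
        = ε1 * (T - S) * q / (q + (1 - q) * (ε1 + ε2))) ∧
    (∀ q ∈ Set.Ioc (0 : ℝ) 1, a13 T R P S ε1 ε2 q > a31 T R P S ε1 ε2 q) ∧
    StrictMonoOn (fun q => a13 T R P S ε1 ε2 q - a31 T R P S ε1 ε2 q)
      (Set.Icc (0 : ℝ) 1) := by
  have hD : (1 : ℝ) - ε1 - ε2 > 0 := by linarith
  have hx : ∀ q : ℝ, 0 ≤ q → q ≤ 1 → 0 < q + (1 - q) * (ε1 + ε2) := by
    intro q h0 h1
    nlinarith [mul_nonneg (sub_nonneg.2 h1) (by linarith : (0:ℝ) ≤ ε1 + ε2)]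
  have hId : ∀ q ∈ Set.Icc (0 : ℝ) 1,
      a13 T R P S ε1 ε2 q - a31 T R P S ε1 ε2 q
        = ε1 * (T - S) * q / (q + (1 - q) * (ε1 + ε2)) := by
    rintro q ⟨h0, h1⟩
    have hxq := hx q h0 h1
    unfold a13 a31
    field_simp
    ring
  refine ⟨hId, ?_, ?_⟩
  · rintro q ⟨h0, h1⟩
    have hxq := hx q h0.le h1
    have := hId q ⟨h0.le, h1⟩
    have hpos : 0 < ε1 * (T - S) * q / (q + (1 - q) * (ε1 + ε2)) := by
      apply div_pos _ hxq
      have : 0 < T - S := by linarith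
      positivity
    linarith
  · intro p hp q hq hpq
    simp only
    rw [hId p hp, hId q hq]
    have hxp := hx p hp.1 hp.2
    have hxq := hx q hq.1 hq.2
    have hk : 0 < ε1 * (T - S) := by
      have : 0 < T - S := by linarith
      positivity
    rw [div_lt_div_iff₀ hxp hxq]
    have h1 : p * (q + (1 - q) * (ε1 + ε2)) < q * (p + (1 - p) * (ε1 + ε2)) := by
      nlinarith [hε1, hε2]
    nlinarith
end

section
/- There exists r0>0 such that for all ε1,ε2>0 with √(ε1²+ε2²)<r0: for every α ∈ (F(ε1/ε2), R+(T−R)ε1) the equation a13(q)=α has exactly one root q in the open interval (0,1), and for every β ∈ (F(ε1/ε2), R−(R−S)ε1) the equation a31(q)=β has exactly one root q in (0,1). -/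
set_option maxHeartbeats 1600000

/-- Abstract rearrangement for `a13`. -/
lemma aux13 (G C K D em q x : ℝ) (hD : D ≠ 0) (hx : x ≠ 0) (hrel : D*(1-q) = 1 - x) :
    G*(1-q)/x^2 - (em/x)*(C/D) + K/D = (G/D)/x^2 + (-(G/D) - em*(C/D))/x + K/D := by
  have h1q : (1:ℝ)-q = (1-x)/D := by rw [eq_div_iff hD]; linarith [hrel]
  rw [h1q]
  field_simp
  ring

/-- Abstract rearrangement for `a31`. -/
lemma aux31 (G C K D em x : ℝ) (hD : D ≠ 0) (hx : x ≠ 0) :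
    G/(D*x^2) - (em/x)*(C/D) + K/D = (G/D)/x^2 + (-(em*(C/D)))/x + K/D := by
  field_simp
  ring

/-- Key lemma: a function of the form `q ↦ a/x² + b/x + c`, `x = q + (1-q)s`, is strictly
monotone on `[0,1]` when `2a+b<0` and `2a+bs<0`, so each value strictly between the endpoint
values is attained exactly once on `(0,1)`. -/
lemma quad_unique_root (a b c s : ℝ) (hs : 0 < s) (hs1 : s < 1)
    (hA : 2*a + b < 0) (hB : 2*a + b*s < 0) (α : ℝ)
    (hlo : a/s^2 + b/s + c < α) (hhi : α < a + b + c) :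
    ∃! q : ℝ, q ∈ Set.Ioo (0:ℝ) 1 ∧ a/(q+(1-q)*s)^2 + b/(q+(1-q)*s) + c = α := by
  set g : ℝ → ℝ := fun q => a/(q+(1-q)*s)^2 + b/(q+(1-q)*s) + c with hg
  have hxlb : ∀ q ∈ Set.Icc (0:ℝ) 1, s ≤ q+(1-q)*s := by
    intro q hq
    have := mul_nonneg hq.1 (by linarith : (0:ℝ) ≤ 1-s)
    nlinarith
  have hxub : ∀ q ∈ Set.Icc (0:ℝ) 1, q+(1-q)*s ≤ 1 := by
    intro q hq
    have := mul_nonneg (by linarith [hq.2] : (0:ℝ) ≤ 1-q) (by linarith : (0:ℝ) ≤ 1-s)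
    nlinarith
  have hmono : StrictMonoOn g (Set.Icc 0 1) := by
    intro q1 h1 q2 h2 hlt
    have hx1s := hxlb q1 h1
    have hx2s := hxlb q2 h2
    have hx1u := hxub q1 h1
    have hx2u := hxub q2 h2
    set x1 := q1+(1-q1)*s with hx1d
    set x2 := q2+(1-q2)*s with hx2d
    have hx1 : 0 < x1 := lt_of_lt_of_le hs hx1s
    have hx2 : 0 < x2 := lt_of_lt_of_le hs hx2s
    have h12 : x1 < x2 := by
      rw [hx1d, hx2d]
      have := mul_pos (by linarith : (0:ℝ) < q2-q1) (by linarith : (0:ℝ) < 1-s)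
      nlinarith
    have hu1a : 1/x1 ≤ 1/s := one_div_le_one_div_of_le hs hx1s
    have hu2a : 1/x2 ≤ 1/s := one_div_le_one_div_of_le hs hx2s
    have hu1b : 1 ≤ 1/x1 := by
      have := one_div_le_one_div_of_le hx1 hx1u; norm_num at this; simpa [one_div] using this
    have hu2b : 1 ≤ 1/x2 := by
      have := one_div_le_one_div_of_le hx2 hx2u; norm_num at this; simpa [one_div] using this
    have hts : (1/x1 + 1/x2) * s ≤ 2 := by
      have h1 : (1/x1) * s ≤ 1 := by
        rw [one_div, inv_mul_le_iff₀ hx1]; simpa using hx1s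
      have h2 : (1/x2) * s ≤ 1 := by
        rw [one_div, inv_mul_le_iff₀ hx2]; simpa using hx2s
      linarith
    have hkey : a*(1/x1 + 1/x2) + b < 0 := by
      rcases le_or_gt a 0 with ha | ha
      · linarith [mul_nonpos_of_nonpos_of_nonneg ha (by linarith : (0:ℝ) ≤ 1/x1 + 1/x2 - 2)]
      · have h1 : s * (a*(1/x1+1/x2) + b) < 0 := by
          have h2 := mul_le_mul_of_nonneg_left hts ha.le
          nlinarith [h2]
        by_contra h
        push_neg at h
        linarith [mul_nonneg hs.le h]
    have hd : (a/x2^2 + b/x2 + c) - (a/x1^2 + b/x1 + c)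
        = (1/x1 - 1/x2) * (-(a*(1/x1+1/x2)+b)) := by
      field_simp
      ring
    have hp : 0 < 1/x1 - 1/x2 := by
      have := one_div_lt_one_div_of_lt hx1 h12
      linarith
    have hpos := mul_pos hp (by linarith : (0:ℝ) < -(a*(1/x1+1/x2)+b))
    show a/x1^2 + b/x1 + c < a/x2^2 + b/x2 + c
    linarith
  have hcont : ContinuousOn g (Set.Icc 0 1) := by
    have hxc : Continuous (fun q : ℝ => q+(1-q)*s) :=
      continuous_id.add ((continuous_const.sub continuous_id).mul continuous_const)
    have hne : ∀ q ∈ Set.Icc (0:ℝ) 1, q+(1-q)*s ≠ 0 :=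
      fun q hq => ne_of_gt (lt_of_lt_of_le hs (hxlb q hq))
    apply ContinuousOn.add
    apply ContinuousOn.add
    · exact continuousOn_const.div ((hxc.pow 2).continuousOn)
        (fun q hq => pow_ne_zero 2 (hne q hq))
    · exact continuousOn_const.div hxc.continuousOn hne
    · exact continuousOn_const
  have hg0 : g 0 = a/s^2 + b/s + c := by simp [hg]
  have hg1 : g 1 = a + b + c := by norm_num [hg]
  obtain ⟨q, hq, hgq⟩ := intermediate_value_Ioo (by norm_num : (0:ℝ) ≤ 1) hcont
    (by rw [hg0, hg1]; exact ⟨hlo, hhi⟩)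
  refine ⟨q, ⟨hq, hgq⟩, ?_⟩
  rintro y ⟨hy, hgy⟩
  exact hmono.injOn (Set.Ioo_subset_Icc_self hy) (Set.Ioo_subset_Icc_self hq)
    (hgy.trans hgq.symm)

theorem stmt_6 (T R P S : ℝ) (hTR : T > R) (hRP : R > P) (hPS : P > S)
    (hlow : P < (S + T) / 2) (hup : (S + T) / 2 < R) :
    ∃ r0 : ℝ, 0 < r0 ∧
      ∀ ε1 ε2 : ℝ, 0 < ε1 → 0 < ε2 → Real.sqrt (ε1 ^ 2 + ε2 ^ 2) < r0 →
        (∀ α ∈ Set.Ioo (F P S T R (ε1 / ε2)) (R + (T - R) * ε1),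
          ∃! q : ℝ, q ∈ Set.Ioo (0 : ℝ) 1 ∧ a13 T R P S ε1 ε2 q = α) ∧
        (∀ β ∈ Set.Ioo (F P S T R (ε1 / ε2)) (R - (R - S) * ε1),
          ∃! q : ℝ, q ∈ Set.Ioo (0 : ℝ) 1 ∧ a31 T R P S ε1 ε2 q = β) := by
  have hM : 0 < 2*((T-P)+(R-S)) := by linarith
  have hX : 0 < 2*R-S-T := by linarith
  have hY : 0 < S+T-2*P := by linarith
  refine ⟨min (1/4) (min ((2*R-S-T)/(2*((T-P)+(R-S)))) ((S+T-2*P)/(2*((T-P)+(R-S))))),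
    lt_min (by norm_num) (lt_min (div_pos hX hM) (div_pos hY hM)), ?_⟩
  intro ε1 ε2 hε1 hε2 hsq
  have hle1 : ε1 ≤ Real.sqrt (ε1^2+ε2^2) := by
    calc ε1 = Real.sqrt (ε1^2) := (Real.sqrt_sq hε1.le).symm
    _ ≤ Real.sqrt (ε1^2+ε2^2) := Real.sqrt_le_sqrt (by linarith [sq_nonneg ε2])
  have hle2 : ε2 ≤ Real.sqrt (ε1^2+ε2^2) := by
    calc ε2 = Real.sqrt (ε2^2) := (Real.sqrt_sq hε2.le).symm
    _ ≤ Real.sqrt (ε1^2+ε2^2) := Real.sqrt_le_sqrt (by linarith [sq_nonneg ε1])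
  have hε1r := lt_of_le_of_lt hle1 hsq
  have hε2r := lt_of_le_of_lt hle2 hsq
  have hε14 : ε1 < 1/4 := lt_of_lt_of_le hε1r (min_le_left _ _)
  have hε24 : ε2 < 1/4 := lt_of_lt_of_le hε2r (min_le_left _ _)
  have hε1X : ε1 < (2*R-S-T)/(2*((T-P)+(R-S))) :=
    lt_of_lt_of_le hε1r (le_trans (min_le_right _ _) (min_le_left _ _))
  have hε2X : ε2 < (2*R-S-T)/(2*((T-P)+(R-S))) :=
    lt_of_lt_of_le hε2r (le_trans (min_le_right _ _) (min_le_left _ _))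
  have hε1Y : ε1 < (S+T-2*P)/(2*((T-P)+(R-S))) :=
    lt_of_lt_of_le hε1r (le_trans (min_le_right _ _) (min_le_right _ _))
  have hε2Y : ε2 < (S+T-2*P)/(2*((T-P)+(R-S))) :=
    lt_of_lt_of_le hε2r (le_trans (min_le_right _ _) (min_le_right _ _))
  have hδX : ε1*(T-P)+ε2*(R-S) < (2*R-S-T)/2 := by
    have hc : (2*R-S-T)/(2*((T-P)+(R-S)))*(2*((T-P)+(R-S))) = 2*R-S-T :=
      div_mul_cancel₀ _ (ne_of_gt hM)
    linarith [mul_lt_mul_of_pos_right hε1X (by linarith : (0:ℝ) < T-P),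
      mul_lt_mul_of_pos_right hε2X (by linarith : (0:ℝ) < R-S)]
  have hδY : ε1*(T-P)+ε2*(R-S) < (S+T-2*P)/2 := by
    have hc : (S+T-2*P)/(2*((T-P)+(R-S)))*(2*((T-P)+(R-S))) = S+T-2*P :=
      div_mul_cancel₀ _ (ne_of_gt hM)
    linarith [mul_lt_mul_of_pos_right hε1Y (by linarith : (0:ℝ) < T-P),
      mul_lt_mul_of_pos_right hε2Y (by linarith : (0:ℝ) < R-S)]
  have hs : 0 < ε1+ε2 := by linarith
  have hs1 : ε1+ε2 < 1 := by linarith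
  have h1s : 0 < 1-ε1-ε2 := by linarith
  have hxpos : ∀ q ∈ Set.Icc (0:ℝ) 1, (0:ℝ) < q+(1-q)*(ε1+ε2) := by
    intro q hq
    linarith [mul_nonneg hq.1 (by linarith : (0:ℝ) ≤ 1-(ε1+ε2)), hq.1]
  constructor
  · -- a13 case
    intro α hα
    have hA : 2*(((R-T)+(P-S))*ε1^2/(1-ε1-ε2))
        + (-(((R-T)+(P-S))*ε1^2/(1-ε1-ε2)) - ε1*((2*R-S-T+(T-R)*(ε1+ε2))/(1-ε1-ε2))) < 0 := by
      have he : 2*(((R-T)+(P-S))*ε1^2/(1-ε1-ε2))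
          + (-(((R-T)+(P-S))*ε1^2/(1-ε1-ε2)) - ε1*((2*R-S-T+(T-R)*(ε1+ε2))/(1-ε1-ε2)))
          = ((((R-T)+(P-S))*ε1 - (2*R-S-T+(T-R)*(ε1+ε2)))*ε1)/(1-ε1-ε2) := by
        field_simp; ring
      rw [he]
      apply div_neg_of_neg_of_pos _ h1s
      have hG : ((R-T)+(P-S))*ε1 < 2*R-S-T+(T-R)*(ε1+ε2) := by
        rcases le_or_gt ((R-T)+(P-S)) 0 with h | h
        · linarith [mul_nonpos_of_nonpos_of_nonneg h hε1.le,
            mul_pos (by linarith : (0:ℝ) < T-R) hs]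
        · linarith [mul_lt_mul_of_pos_left hε14 h,
            mul_pos (by linarith : (0:ℝ) < T-R) hs]
      exact mul_neg_of_neg_of_pos (by linarith) hε1
    have hB : 2*(((R-T)+(P-S))*ε1^2/(1-ε1-ε2))
        + (-(((R-T)+(P-S))*ε1^2/(1-ε1-ε2)) - ε1*((2*R-S-T+(T-R)*(ε1+ε2))/(1-ε1-ε2)))*(ε1+ε2) < 0 := by
      have he : 2*(((R-T)+(P-S))*ε1^2/(1-ε1-ε2))
          + (-(((R-T)+(P-S))*ε1^2/(1-ε1-ε2)) - ε1*((2*R-S-T+(T-R)*(ε1+ε2))/(1-ε1-ε2)))*(ε1+ε2)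
          = ((((R-T)+(P-S))*ε1*(2-(ε1+ε2)) - (2*R-S-T+(T-R)*(ε1+ε2))*(ε1+ε2))*ε1)/(1-ε1-ε2) := by
        field_simp; ring
      rw [he]
      apply div_neg_of_neg_of_pos _ h1s
      have hC : (0:ℝ) < 2*R-S-T+(T-R)*(ε1+ε2) := by
        linarith [mul_pos (by linarith : (0:ℝ) < T-R) hs]
      have hG : ((R-T)+(P-S))*ε1*(2-(ε1+ε2)) < (2*R-S-T+(T-R)*(ε1+ε2))*(ε1+ε2) := by
        rcases le_or_gt ((R-T)+(P-S)) 0 with h | h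
        · linarith [mul_nonpos_of_nonpos_of_nonneg
              (mul_nonpos_of_nonpos_of_nonneg h hε1.le)
              (by linarith : (0:ℝ) ≤ 2-(ε1+ε2)),
            mul_pos hC hs]
        · have k1 : ((R-T)+(P-S))*ε1*(2-(ε1+ε2)) < ((R-T)+(P-S))*(ε1+ε2)*(2-(ε1+ε2)) :=
            mul_lt_mul_of_pos_right (mul_lt_mul_of_pos_left (by linarith : ε1 < ε1+ε2) h)
              (by linarith)
          have k2 : ((R-T)+(P-S))*(2-(ε1+ε2)) ≤ 2*R-S-T+(T-R)*(ε1+ε2) := by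
            linarith [mul_nonneg h.le hs.le,
              mul_nonneg (by linarith : (0:ℝ) ≤ T-R) hs.le]
          have k3 : ((R-T)+(P-S))*(2-(ε1+ε2))*(ε1+ε2) ≤ (2*R-S-T+(T-R)*(ε1+ε2))*(ε1+ε2) :=
            mul_le_mul_of_nonneg_right k2 hs.le
          linarith
      exact mul_neg_of_neg_of_pos (by linarith) hε1
    have hlo : (((R-T)+(P-S))*ε1^2/(1-ε1-ε2))/(ε1+ε2)^2
        + (-(((R-T)+(P-S))*ε1^2/(1-ε1-ε2)) - ε1*((2*R-S-T+(T-R)*(ε1+ε2))/(1-ε1-ε2)))/(ε1+ε2)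
        + (R*(1-ε2)-ε1*S)/(1-ε1-ε2) < α := by
      have hF : F P S T R (ε1/ε2) =
          (((R-T)+(P-S))*ε1^2/(1-ε1-ε2))/(ε1+ε2)^2
          + (-(((R-T)+(P-S))*ε1^2/(1-ε1-ε2)) - ε1*((2*R-S-T+(T-R)*(ε1+ε2))/(1-ε1-ε2)))/(ε1+ε2)
          + (R*(1-ε2)-ε1*S)/(1-ε1-ε2) := by
        unfold F
        field_simp
        ring
      rw [← hF]; exact hα.1
    have hhi : α < (((R-T)+(P-S))*ε1^2/(1-ε1-ε2))
        + (-(((R-T)+(P-S))*ε1^2/(1-ε1-ε2)) - ε1*((2*R-S-T+(T-R)*(ε1+ε2))/(1-ε1-ε2)))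
        + (R*(1-ε2)-ε1*S)/(1-ε1-ε2) := by
      have hT : (((R-T)+(P-S))*ε1^2/(1-ε1-ε2))
          + (-(((R-T)+(P-S))*ε1^2/(1-ε1-ε2)) - ε1*((2*R-S-T+(T-R)*(ε1+ε2))/(1-ε1-ε2)))
          + (R*(1-ε2)-ε1*S)/(1-ε1-ε2) = R + (T-R)*ε1 := by
        field_simp; ring
      rw [hT]; exact hα.2
    obtain ⟨q, ⟨hq, heq⟩, huniq⟩ := quad_unique_root _ _ _ (ε1+ε2) hs hs1 hA hB α hlo hhi
    have hfe : ∀ y ∈ Set.Icc (0:ℝ) 1, a13 T R P S ε1 ε2 y =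
        (((R-T)+(P-S))*ε1^2/(1-ε1-ε2)) / (y+(1-y)*(ε1+ε2))^2
        + (-(((R-T)+(P-S))*ε1^2/(1-ε1-ε2)) - ε1*((2*R-S-T+(T-R)*(ε1+ε2))/(1-ε1-ε2))) / (y+(1-y)*(ε1+ε2))
        + (R*(1-ε2)-ε1*S)/(1-ε1-ε2) := by
      intro y hy
      have hx := hxpos y hy
      unfold a13
      exact aux13 _ _ _ _ _ _ _ h1s.ne' hx.ne' (by ring)
    refine ⟨q, ⟨hq, by rw [hfe q (Set.Ioo_subset_Icc_self hq)]; exact heq⟩, ?_⟩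
    rintro y ⟨hy, hay⟩
    exact huniq y ⟨hy, by rw [← hfe y (Set.Ioo_subset_Icc_self hy)]; exact hay⟩
  · -- a31 case
    intro β hβ
    have hA : 2*(((R-T)+(P-S))*ε1^2/(1-ε1-ε2))
        + (-(ε1*((2*R-S-T-(ε1*(T-P)+ε2*(R-S)))/(1-ε1-ε2)))) < 0 := by
      have he : 2*(((R-T)+(P-S))*ε1^2/(1-ε1-ε2))
          + (-(ε1*((2*R-S-T-(ε1*(T-P)+ε2*(R-S)))/(1-ε1-ε2))))
          = ((2*((R-T)+(P-S))*ε1 - (2*R-S-T-(ε1*(T-P)+ε2*(R-S))))*ε1)/(1-ε1-ε2) := by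
        field_simp; ring
      rw [he]
      apply div_neg_of_neg_of_pos _ h1s
      have hG : 2*((R-T)+(P-S))*ε1 < 2*R-S-T-(ε1*(T-P)+ε2*(R-S)) := by
        rcases le_or_gt ((R-T)+(P-S)) 0 with h | h
        · linarith [mul_nonpos_of_nonpos_of_nonneg h hε1.le, hδX]
        · linarith [mul_lt_mul_of_pos_left hε14 h, hδX]
      exact mul_neg_of_neg_of_pos (by linarith) hε1
    have hB : 2*(((R-T)+(P-S))*ε1^2/(1-ε1-ε2))
        + (-(ε1*((2*R-S-T-(ε1*(T-P)+ε2*(R-S)))/(1-ε1-ε2))))*(ε1+ε2) < 0 := by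
      have he : 2*(((R-T)+(P-S))*ε1^2/(1-ε1-ε2))
          + (-(ε1*((2*R-S-T-(ε1*(T-P)+ε2*(R-S)))/(1-ε1-ε2))))*(ε1+ε2)
          = ((2*((R-T)+(P-S))*ε1 - (2*R-S-T-(ε1*(T-P)+ε2*(R-S)))*(ε1+ε2))*ε1)/(1-ε1-ε2) := by
        field_simp; ring
      rw [he]
      apply div_neg_of_neg_of_pos _ h1s
      have hG : 2*((R-T)+(P-S))*ε1 < (2*R-S-T-(ε1*(T-P)+ε2*(R-S)))*(ε1+ε2) := by
        rcases le_or_gt ((R-T)+(P-S)) 0 with h | h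
        · linarith [mul_nonpos_of_nonpos_of_nonneg h hε1.le,
            mul_pos (by linarith [hδX] : (0:ℝ) < 2*R-S-T-(ε1*(T-P)+ε2*(R-S))) hs]
        · have k1 : ((R-T)+(P-S))*ε1 < ((R-T)+(P-S))*(ε1+ε2) :=
            mul_lt_mul_of_pos_left (by linarith : ε1 < ε1+ε2) h
          have k2 : 2*((R-T)+(P-S))*(ε1+ε2) ≤ (2*R-S-T-(ε1*(T-P)+ε2*(R-S)))*(ε1+ε2) :=
            mul_le_mul_of_nonneg_right
              (by linarith [hδY] : 2*((R-T)+(P-S)) ≤ 2*R-S-T-(ε1*(T-P)+ε2*(R-S))) hs.le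
          linarith
      exact mul_neg_of_neg_of_pos (by linarith) hε1
    have hlo : (((R-T)+(P-S))*ε1^2/(1-ε1-ε2))/(ε1+ε2)^2
        + (-(ε1*((2*R-S-T-(ε1*(T-P)+ε2*(R-S)))/(1-ε1-ε2))))/(ε1+ε2)
        + (R*(1-ε2)-ε1*T)/(1-ε1-ε2) < β := by
      have hF : F P S T R (ε1/ε2) =
          (((R-T)+(P-S))*ε1^2/(1-ε1-ε2))/(ε1+ε2)^2
          + (-(ε1*((2*R-S-T-(ε1*(T-P)+ε2*(R-S)))/(1-ε1-ε2))))/(ε1+ε2)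
          + (R*(1-ε2)-ε1*T)/(1-ε1-ε2) := by
        unfold F
        field_simp
        ring
      rw [← hF]; exact hβ.1
    have hhi : β < (((R-T)+(P-S))*ε1^2/(1-ε1-ε2))
        + (-(ε1*((2*R-S-T-(ε1*(T-P)+ε2*(R-S)))/(1-ε1-ε2))))
        + (R*(1-ε2)-ε1*T)/(1-ε1-ε2) := by
      have hT : (((R-T)+(P-S))*ε1^2/(1-ε1-ε2))
          + (-(ε1*((2*R-S-T-(ε1*(T-P)+ε2*(R-S)))/(1-ε1-ε2))))
          + (R*(1-ε2)-ε1*T)/(1-ε1-ε2) = R - (R-S)*ε1 := by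
        field_simp; ring
      rw [hT]; exact hβ.2
    obtain ⟨q, ⟨hq, heq⟩, huniq⟩ := quad_unique_root _ _ _ (ε1+ε2) hs hs1 hA hB β hlo hhi
    have hfe : ∀ y ∈ Set.Icc (0:ℝ) 1, a31 T R P S ε1 ε2 y =
        (((R-T)+(P-S))*ε1^2/(1-ε1-ε2)) / (y+(1-y)*(ε1+ε2))^2
        + (-(ε1*((2*R-S-T-(ε1*(T-P)+ε2*(R-S)))/(1-ε1-ε2)))) / (y+(1-y)*(ε1+ε2))
        + (R*(1-ε2)-ε1*T)/(1-ε1-ε2) := by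
      intro y hy
      have hx := hxpos y hy
      unfold a31
      exact aux31 _ _ _ _ _ _ h1s.ne' hx.ne'
    refine ⟨q, ⟨hq, by rw [hfe q (Set.Ioo_subset_Icc_self hq)]; exact heq⟩, ?_⟩
    rintro y ⟨hy, hay⟩
    exact huniq y ⟨hy, by rw [← hfe y (Set.Ioo_subset_Icc_self hy)]; exact hay⟩
end

section
/- There exists r0>0 such that for all ε1,ε2>0 with √(ε1²+ε2²)<r0, the quantity x1(P123) = 1/(1 − (T−P)/(P−S) + (F(ε1/ε2)−P)/((P−S)ε2)) satisfies 0 < x1(P123) < 1. (In particular the red equilibrium, whose first coordinate is x1(P123) and which does not depend on q, is always biological.) -/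
theorem stmt_7 (T R P S : ℝ) (hTR : T > R) (hRP : R > P) (hPS : P > S)
    (hlow : P < (S + T) / 2) (hup : (S + T) / 2 < R) :
    ∃ r0 : ℝ, 0 < r0 ∧
      ∀ ε1 ε2 : ℝ, 0 < ε1 → 0 < ε2 → Real.sqrt (ε1 ^ 2 + ε2 ^ 2) < r0 →
        0 < 1 / (1 - (T - P) / (P - S) + (F P S T R (ε1 / ε2) - P) / ((P - S) * ε2)) ∧
        1 / (1 - (T - P) / (P - S) + (F P S T R (ε1 / ε2) - P) / ((P - S) * ε2)) < 1 := by
  have hTP : 0 < T - P := by linarith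
  have hPS' : 0 < P - S := by linarith
  have hc1 : 0 < S + T - 2 * P := by linarith
  have hc2 : 0 < R - P := by linarith
  set c := min (S + T - 2 * P) (R - P) with hc
  have hcpos : 0 < c := lt_min hc1 hc2
  refine ⟨c / (2 * (T - P)), by positivity, ?_⟩
  intro ε1 ε2 h1 h2 hr
  have hsum : 0 < ε1 + ε2 := by linarith
  -- bound on ε1 + ε2
  have hb1 : ε1 ≤ Real.sqrt (ε1 ^ 2 + ε2 ^ 2) := by
    nlinarith [Real.sq_sqrt (by positivity : (0:ℝ) ≤ ε1 ^ 2 + ε2 ^ 2),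
      Real.sqrt_nonneg (ε1 ^ 2 + ε2 ^ 2), sq_nonneg ε2]
  have hb2 : ε2 ≤ Real.sqrt (ε1 ^ 2 + ε2 ^ 2) := by
    nlinarith [Real.sq_sqrt (by positivity : (0:ℝ) ≤ ε1 ^ 2 + ε2 ^ 2),
      Real.sqrt_nonneg (ε1 ^ 2 + ε2 ^ 2), sq_nonneg ε1]
  have hbound : (T - P) * (ε1 + ε2) < c := by
    have : ε1 + ε2 < c / (T - P) := by
      have h2r : 2 * (c / (2 * (T - P))) = c / (T - P) := by
        field_simp
      linarith
    calc (T - P) * (ε1 + ε2) < (T - P) * (c / (T - P)) := by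
          exact (mul_lt_mul_iff_right₀ hTP).2 this
      _ = c := by field_simp
  have hA : (T - P) * (ε1 + ε2) < S + T - 2 * P := lt_of_lt_of_le hbound (min_le_left _ _)
  have hB : (T - P) * (ε1 + ε2) < R - P := lt_of_lt_of_le hbound (min_le_right _ _)
  -- rewrite F
  have hFeq : F P S T R (ε1 / ε2) - P =
      ((S + T - 2 * P) * ε1 * ε2 + (R - P) * ε2 ^ 2) / (ε1 + ε2) ^ 2 := by
    unfold F
    have h2' : ε2 ≠ 0 := ne_of_gt h2
    have hs : (ε1 + ε2) ≠ 0 := ne_of_gt hsum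
    have h1e : (1 : ℝ) + ε1 / ε2 = (ε1 + ε2) / ε2 := by field_simp; ring
    rw [h1e]
    field_simp
    ring
  have hkey : (T - P) * ε2 < F P S T R (ε1 / ε2) - P := by
    rw [hFeq, lt_div_iff₀ (by positivity)]
    nlinarith [mul_pos h1 h2, mul_pos h2 h2]
  have hD : 1 < 1 - (T - P) / (P - S) + (F P S T R (ε1 / ε2) - P) / ((P - S) * ε2) := by
    have : (T - P) / (P - S) < (F P S T R (ε1 / ε2) - P) / ((P - S) * ε2) := by
      rw [div_lt_div_iff₀ hPS' (by positivity)]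
      nlinarith
    linarith
  have hDpos : (0:ℝ) < 1 - (T - P) / (P - S) + (F P S T R (ε1 / ε2) - P) / ((P - S) * ε2) :=
    lt_trans one_pos hD
  exact ⟨by positivity, by rw [div_lt_one hDpos]; exact hD⟩
end

section
/- There exists r0>0 such that for all ε1,ε2>0 with √(ε1²+ε2²)<r0 and all q ∈ (ε2,1] with a13(q) ≠ R: setting x1(P132) = 1/(1 + (a31(q)−F(ε1/ε2))/(a13(q)−R)), one has 0 < x1(P132) < 1 if and only if a13(q) > R. (The green equilibrium is biological if and only if q exceeds the unique root q_green of a13(q)=R.) -/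
set_option maxHeartbeats 1000000

lemma auxE (T R P S δ x ε1 m : ℝ) (hm0 : 0 < m)
    (hmc : m ≤ 2 * R - S - T) (hmp : m ≤ S + T - 2 * P)
    (h1 : 0 < ε1) (hε1δ : ε1 < δ) (hδx : δ < x) (hx1 : x ≤ 1)
    (hδm : δ * (R - S) < m) :
    0 < δ * x * (2 * R - S - T - δ * (R - S)) + (R + P - S - T) * ε1 * (δ * x - δ - x) := by
  have hδ0 : 0 < δ := lt_trans h1 hε1δ
  have hx0 : 0 < x := lt_trans hδ0 hδx
  rcases le_or_gt 0 (R + P - S - T) with hG | hG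
  · have key : 0 < δ * x * (S + T - 2 * P - δ * (R - S)) :=
      mul_pos (mul_pos hδ0 hx0) (by linarith)
    have h1' : 0 ≤ (R + P - S - T) * (δ * (x - ε1)) :=
      mul_nonneg hG (mul_nonneg hδ0.le (by linarith))
    have h2' : 0 ≤ (R + P - S - T) * (x * (δ - ε1)) :=
      mul_nonneg hG (mul_nonneg hx0.le (by linarith))
    have h3' : 0 ≤ (R + P - S - T) * (ε1 * (δ * x)) :=
      mul_nonneg hG (by positivity)
    nlinarith [key, h1', h2', h3']
  · have key : 0 < δ * x * (2 * R - S - T - δ * (R - S)) :=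
      mul_pos (mul_pos hδ0 hx0) (by linarith)
    have hδ1 : δ ≤ 1 := by linarith
    have h4' : 0 ≤ (-(R + P - S - T)) * ε1 * (δ + x - δ * x) := by
      apply mul_nonneg (mul_nonneg (by linarith) h1.le); nlinarith
    nlinarith [key, h4']

theorem stmt_10 (T R P S : ℝ) (hTR : T > R) (hRP : R > P) (hPS : P > S)
    (hlow : P < (S + T) / 2) (hup : (S + T) / 2 < R) :
    ∃ r0 : ℝ, 0 < r0 ∧
      ∀ ε1 ε2 : ℝ, 0 < ε1 → 0 < ε2 → Real.sqrt (ε1 ^ 2 + ε2 ^ 2) < r0 →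
        ∀ q ∈ Set.Ioc ε2 1, a13 T R P S ε1 ε2 q ≠ R →
          ((0 < 1 / (1 + (a31 T R P S ε1 ε2 q - F P S T R (ε1 / ε2)) /
                (a13 T R P S ε1 ε2 q - R)) ∧
            1 / (1 + (a31 T R P S ε1 ε2 q - F P S T R (ε1 / ε2)) /
                (a13 T R P S ε1 ε2 q - R)) < 1)
            ↔ a13 T R P S ε1 ε2 q > R) := by
  have hc : 0 < 2 * R - S - T := by linarith
  have hm2 : 0 < S + T - 2 * P := by linarith
  have hRS : 0 < R - S := by linarith
  obtain ⟨m, hmc, hmp, hm0⟩ :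
      ∃ m : ℝ, m ≤ 2 * R - S - T ∧ m ≤ S + T - 2 * P ∧ 0 < m :=
    ⟨min (2 * R - S - T) (S + T - 2 * P), min_le_left _ _, min_le_right _ _, lt_min hc hm2⟩
  refine ⟨min (1/4) (m / (2 * (R - S) + 2)), lt_min (by norm_num) (by positivity), ?_⟩
  intro ε1 ε2 h1 h2 hr q hq hne
  obtain ⟨hq1, hq2⟩ := hq
  have hsqrt1 : ε1 ≤ Real.sqrt (ε1 ^ 2 + ε2 ^ 2) := by
    have h := Real.sqrt_le_sqrt (show ε1 ^ 2 ≤ ε1 ^ 2 + ε2 ^ 2 by nlinarith)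
    rwa [Real.sqrt_sq h1.le] at h
  have hsqrt2 : ε2 ≤ Real.sqrt (ε1 ^ 2 + ε2 ^ 2) := by
    have h := Real.sqrt_le_sqrt (show ε2 ^ 2 ≤ ε1 ^ 2 + ε2 ^ 2 by nlinarith)
    rwa [Real.sqrt_sq h2.le] at h
  have hε1r : ε1 < min (1/4) (m / (2 * (R - S) + 2)) := lt_of_le_of_lt hsqrt1 hr
  have hε2r : ε2 < min (1/4) (m / (2 * (R - S) + 2)) := lt_of_le_of_lt hsqrt2 hr
  have hε1a : ε1 < 1/4 := lt_of_lt_of_le hε1r (min_le_left _ _)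
  have hε2a : ε2 < 1/4 := lt_of_lt_of_le hε2r (min_le_left _ _)
  have hε1b : ε1 < m / (2 * (R - S) + 2) := lt_of_lt_of_le hε1r (min_le_right _ _)
  have hε2b : ε2 < m / (2 * (R - S) + 2) := lt_of_lt_of_le hε2r (min_le_right _ _)
  have hδ0 : 0 < ε1 + ε2 := by linarith
  have hδ1 : ε1 + ε2 < 1/2 := by linarith
  have hδm : (ε1 + ε2) * (R - S) < m := by
    have hpos : (0:ℝ) < 2 * (R - S) + 2 := by linarith
    have h2' : (ε1 + ε2) * (2 * (R - S) + 2) < 2 * (m / (2 * (R - S) + 2)) * (2 * (R - S) + 2) := by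
      apply mul_lt_mul_of_pos_right (by linarith) hpos
    rw [mul_assoc, div_mul_cancel₀ _ (by linarith : (2 * (R - S) + 2) ≠ 0)] at h2'
    nlinarith
  have hq0 : 0 < q := lt_trans h2 hq1
  have hx0 : 0 < q + (1 - q) * (ε1 + ε2) := by nlinarith
  have hx1 : q + (1 - q) * (ε1 + ε2) ≤ 1 := by nlinarith
  have hδx : ε1 + ε2 < q + (1 - q) * (ε1 + ε2) := by nlinarith
  have hε1x : ε1 < q + (1 - q) * (ε1 + ε2) := by linarith
  have hE : 0 < (ε1 + ε2) * (q + (1 - q) * (ε1 + ε2)) * (2 * R - S - T - (ε1 + ε2) * (R - S))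
      + (R + P - S - T) * ε1 *
        ((ε1 + ε2) * (q + (1 - q) * (ε1 + ε2)) - (ε1 + ε2) - (q + (1 - q) * (ε1 + ε2))) := by
    exact auxE T R P S _ _ _ m hm0 hmc hmp h1 (by linarith) hδx hx1 hδm
  have hFval : F P S T R (ε1 / ε2) =
      (P * ε1 ^ 2 + (S + T) * ε1 * ε2 + R * ε2 ^ 2) / (ε1 + ε2) ^ 2 := by
    have h1p : 1 + ε1 / ε2 = (ε1 + ε2) / ε2 := by
      rw [add_div, div_self h2.ne', add_comm]
    unfold F
    rw [h1p, div_eq_div_iff (by positivity) (by positivity)]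
    field_simp
  have hD0 : (0:ℝ) < 1 - ε1 - ε2 := by linarith
  have hkey : a31 T R P S ε1 ε2 q - F P S T R (ε1 / ε2) =
      ε1 * q * ((ε1 + ε2) * (q + (1 - q) * (ε1 + ε2)) * (2 * R - S - T - (ε1 + ε2) * (R - S))
      + (R + P - S - T) * ε1 *
        ((ε1 + ε2) * (q + (1 - q) * (ε1 + ε2)) - (ε1 + ε2) - (q + (1 - q) * (ε1 + ε2))))
      / ((ε1 + ε2) ^ 2 * (q + (1 - q) * (ε1 + ε2)) ^ 2) := by
    rw [hFval]
    unfold a31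
    field_simp
    ring
  have hNpos : 0 < a31 T R P S ε1 ε2 q - F P S T R (ε1 / ε2) := by
    rw [hkey]; positivity
  set N := a31 T R P S ε1 ε2 q - F P S T R (ε1 / ε2) with hN_def
  set A := a13 T R P S ε1 ε2 q - R with hA_def
  constructor
  · rintro ⟨hpos1, hlt1⟩
    by_contra hA
    have hA' : A < 0 := by
      rcases lt_or_eq_of_le (not_lt.mp hA : a13 T R P S ε1 ε2 q ≤ R) with h | h
      · simp only [hA_def]; linarith
      · exact absurd h hne
    have hd : N / A < 0 := div_neg_of_pos_of_neg hNpos hA'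
    have h1d : 0 < 1 + N / A := one_div_pos.mp hpos1
    have h1d' : 1 < 1 + N / A := (div_lt_one h1d).mp hlt1
    linarith
  · intro hA
    have hA' : 0 < A := by simp only [hA_def]; linarith
    have hd : 0 < N / A := div_pos hNpos hA'
    exact ⟨one_div_pos.mpr (by linarith), (div_lt_one (by linarith)).mpr (by linarith)⟩
end

section
/- There exist K>0 and r0>0 such that for all ε1,ε2>0 with √(ε1²+ε2²)<r0, the unique root q_green ∈ (0,1) of the equation a13(q)=R satisfies |q_green − (2R−S−T)/(R−S) + G1(T−R)ε1/((R−S)(2R−S−T))| ≤ K(ε1²+ε2²). In particular q_green = (2R−S−T)/(R−S) − G1(T−R)ε1/((R−S)(2R−S−T)) + O(r²). -/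
set_option maxHeartbeats 1600000 in
theorem stmt_12 (T R P S : ℝ) (hTR : T > R) (hRP : R > P) (hPS : P > S)
    (hlow : P < (S + T) / 2) (hup : (S + T) / 2 < R) :
    ∃ K r0 : ℝ, 0 < K ∧ 0 < r0 ∧
      ∀ ε1 ε2 : ℝ, 0 < ε1 → 0 < ε2 → Real.sqrt (ε1 ^ 2 + ε2 ^ 2) < r0 →
        ∀ qgreen ∈ Set.Ioo (0 : ℝ) 1, a13 T R P S ε1 ε2 qgreen = R →
          |qgreen - (2 * R - S - T) / (R - S)
              + ((R - T) + (P - S)) * (T - R) * ε1 / ((R - S) * (2 * R - S - T))|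
            ≤ K * (ε1 ^ 2 + ε2 ^ 2) := by
  obtain ⟨A, hA⟩ : ∃ y : ℝ, y = R - S := ⟨_, rfl⟩
  obtain ⟨C0, hC0⟩ : ∃ y : ℝ, y = 2 * R - S - T := ⟨_, rfl⟩
  obtain ⟨G1, hG1⟩ : ∃ y : ℝ, y = (R - T) + (P - S) := ⟨_, rfl⟩
  obtain ⟨q0, hq0⟩ : ∃ y : ℝ, y = C0 / A := ⟨_, rfl⟩
  obtain ⟨al, hal⟩ : ∃ y : ℝ, y = G1 * (T - R) / (A * C0) := ⟨_, rfl⟩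
  obtain ⟨m, hm⟩ : ∃ y : ℝ, y = (C0 - max G1 0) / A := ⟨_, rfl⟩
  obtain ⟨M, hM⟩ : ∃ y : ℝ, y = 2 * C0 * |al| + 6 * A * (1 + |al|) ^ 2
      + 4 * (T - R) * (1 + |al|) + 2 * |G1| * |al| + 2 * |G1| + 1 := ⟨_, rfl⟩
  obtain ⟨N, hN⟩ : ∃ y : ℝ, y = A * |al| + 2 * (T - R) + |G1| + |al| + 1 := ⟨_, rfl⟩
  have hApos : (0 : ℝ) < A := by rw [hA]; linarith
  have hC0pos : (0 : ℝ) < C0 := by rw [hC0]; linarith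
  have hTRd : (0 : ℝ) < T - R := by linarith
  have hC0A : C0 < A := by rw [hA, hC0]; linarith
  have hACT : A - C0 = T - R := by rw [hA, hC0]; ring
  have hG1C0 : G1 < C0 := by rw [hG1, hC0]; linarith
  have hgmax : max G1 0 < C0 := max_lt hG1C0 hC0pos
  have hmpos : (0 : ℝ) < m := by rw [hm]; exact div_pos (by linarith) hApos
  have hAmpos : (0 : ℝ) < A * m := mul_pos hApos hmpos
  have hq0pos : (0 : ℝ) < q0 := by rw [hq0]; exact div_pos hC0pos hApos
  have hq0lt1 : q0 < 1 := by rw [hq0]; exact (div_lt_one hApos).2 hC0A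
  have hAq0 : A * q0 = C0 := by rw [hq0]; field_simp
  have halrel : A * C0 * al = G1 * (T - R) := by rw [hal]; field_simp
  have hMpos : (0 : ℝ) < M := by
    rw [hM]
    nlinarith [mul_nonneg hC0pos.le (abs_nonneg al), mul_nonneg hApos.le (sq_nonneg (1 + |al|)),
      mul_nonneg hTRd.le (show (0:ℝ) ≤ 1 + |al| by positivity),
      mul_nonneg (abs_nonneg G1) (abs_nonneg al), abs_nonneg G1]
  have hNpos : (0 : ℝ) < N := by
    rw [hN]
    nlinarith [mul_nonneg hApos.le (abs_nonneg al), abs_nonneg G1, abs_nonneg al]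
  obtain ⟨r1, hr1⟩ : ∃ y : ℝ, y = min q0 (min (1 - q0) (A * m / 4)) / N := ⟨_, rfl⟩
  have hminpos : (0 : ℝ) < min q0 (min (1 - q0) (A * m / 4)) :=
    lt_min hq0pos (lt_min (by linarith) (div_pos hAmpos (by norm_num)))
  have hr1pos : (0 : ℝ) < r1 := by rw [hr1]; exact div_pos hminpos hNpos
  have hKpos : (0 : ℝ) < 4 * M / (A * m) := div_pos (by linarith) hAmpos
  have hNr1 : N * r1 = min q0 (min (1 - q0) (A * m / 4)) := by
    rw [hr1]; field_simp
  refine ⟨4 * M / (A * m), min (1/4) r1, hKpos, lt_min (by norm_num) hr1pos, ?_⟩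
  intro ε1 ε2 hε1 hε2 hr qgreen hqmem hroot
  obtain ⟨hqa, hqb⟩ := hqmem
  have hR2nn : (0 : ℝ) ≤ ε1 ^ 2 + ε2 ^ 2 := by positivity
  have hε1sq : ε1 ≤ Real.sqrt (ε1 ^ 2 + ε2 ^ 2) := by
    calc ε1 = Real.sqrt (ε1 ^ 2) := (Real.sqrt_sq hε1.le).symm
    _ ≤ Real.sqrt (ε1 ^ 2 + ε2 ^ 2) := Real.sqrt_le_sqrt (by linarith [sq_nonneg ε2])
  have hε2sq : ε2 ≤ Real.sqrt (ε1 ^ 2 + ε2 ^ 2) := by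
    calc ε2 = Real.sqrt (ε2 ^ 2) := (Real.sqrt_sq hε2.le).symm
    _ ≤ Real.sqrt (ε1 ^ 2 + ε2 ^ 2) := Real.sqrt_le_sqrt (by linarith [sq_nonneg ε1])
  have hε1q : ε1 < 1/4 := lt_of_le_of_lt hε1sq (hr.trans_le (min_le_left _ _))
  have hε2q : ε2 < 1/4 := lt_of_le_of_lt hε2sq (hr.trans_le (min_le_left _ _))
  have hε1r1 : ε1 < r1 := lt_of_le_of_lt hε1sq (hr.trans_le (min_le_right _ _))
  have hε2r1 : ε2 < r1 := lt_of_le_of_lt hε2sq (hr.trans_le (min_le_right _ _))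
  have hNε1 : N * ε1 ≤ min q0 (min (1 - q0) (A * m / 4)) := by
    rw [← hNr1]; exact mul_le_mul_of_nonneg_left hε1r1.le hNpos.le
  have hNε2 : N * ε2 ≤ min q0 (min (1 - q0) (A * m / 4)) := by
    rw [← hNr1]; exact mul_le_mul_of_nonneg_left hε2r1.le hNpos.le
  have hNε1q0 : N * ε1 ≤ q0 := hNε1.trans (min_le_left _ _)
  have hNε1q0' : N * ε1 ≤ 1 - q0 := hNε1.trans ((min_le_right _ _).trans (min_le_left _ _))
  have hNε1m : N * ε1 ≤ A * m / 4 := hNε1.trans ((min_le_right _ _).trans (min_le_right _ _))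
  have hNε2m : N * ε2 ≤ A * m / 4 := hNε2.trans ((min_le_right _ _).trans (min_le_right _ _))
  -- abbreviations
  obtain ⟨s, hs⟩ : ∃ y : ℝ, y = ε1 + ε2 := ⟨_, rfl⟩
  obtain ⟨x, hx⟩ : ∃ y : ℝ, y = qgreen + (1 - qgreen) * s := ⟨_, rfl⟩
  obtain ⟨qs, hqs⟩ : ∃ y : ℝ, y = q0 - al * ε1 := ⟨_, rfl⟩
  obtain ⟨xs, hxs⟩ : ∃ y : ℝ, y = qs + (1 - qs) * s := ⟨_, rfl⟩
  obtain ⟨dl, hdl⟩ : ∃ y : ℝ, y = -(al * ε1) + (1 - q0) * s + al * ε1 * s := ⟨_, rfl⟩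
  have hspos : (0 : ℝ) < s := by rw [hs]; linarith
  have hs2 : s ≤ 1/2 := by rw [hs]; linarith
  have hxpos : (0 : ℝ) < x := by
    rw [hx, hs]
    have h := mul_pos (show (0:ℝ) < 1 - qgreen by linarith) (show (0:ℝ) < ε1 + ε2 by linarith)
    linarith [h]
  have hε1x : ε1 ≤ x := by
    rw [hx, hs]
    linarith [mul_pos hqa (show (0:ℝ) < 1 - ε1 by linarith),
      mul_pos (show (0:ℝ) < 1 - qgreen by linarith) hε2]
  have hxne : qgreen + (1 - qgreen) * (ε1 + ε2) ≠ 0 := by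
    have h : x = qgreen + (1 - qgreen) * (ε1 + ε2) := by rw [hx, hs]
    rw [← h]; exact hxpos.ne'
  have h1sne : 1 - ε1 - ε2 ≠ 0 := by
    have h : (0:ℝ) < 1 - ε1 - ε2 := by linarith
    exact h.ne'
  -- the polynomial equation satisfied by qgreen
  have key : (a13 T R P S ε1 ε2 qgreen - R) * ((qgreen + (1 - qgreen) * (ε1 + ε2)) ^ 2 * (1 - ε1 - ε2))
      = ε1 * (A * x ^ 2 - (C0 + (T - R) * s) * x + G1 * ε1 * (1 - qgreen) * (1 - s)) := by
    simp only [hx, hs, hA, hC0, hG1, a13]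
    field_simp
    ring
  have hE : A * x ^ 2 - (C0 + (T - R) * s) * x + G1 * ε1 * (1 - qgreen) * (1 - s) = 0 := by
    have h0 : ε1 * (A * x ^ 2 - (C0 + (T - R) * s) * x + G1 * ε1 * (1 - qgreen) * (1 - s)) = 0 := by
      rw [← key, hroot, sub_self, zero_mul]
    exact (mul_eq_zero.mp h0).resolve_left hε1.ne'
  -- lower bound on x
  have hxm : m ≤ x := by
    have hw1 : (max G1 0 - G1) * ((1 - qgreen) * (1 - s)) * ε1 ≥ 0 := by
      apply mul_nonneg (mul_nonneg (by simp [le_max_left]) _) hε1.le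
      exact mul_nonneg (by linarith) (by linarith)
    have hw2 : max G1 0 * (1 - (1 - qgreen) * (1 - s)) * ε1 ≥ 0 := by
      apply mul_nonneg (mul_nonneg (le_max_right G1 0) _) hε1.le
      linarith [mul_pos hqa (show (0:ℝ) < 1 - s by linarith), hspos]
    have hgb : G1 * ε1 * (1 - qgreen) * (1 - s) ≤ max G1 0 * ε1 := by linarith [hw1, hw2]
    have hge : max G1 0 * ε1 ≤ max G1 0 * x := mul_le_mul_of_nonneg_left hε1x (le_max_right G1 0)
    have hAmdef : A * m = C0 - max G1 0 := by rw [hm]; field_simp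
    have h1 : (C0 - max G1 0) * x ≤ (A * x) * x := by
      linarith [hE, hgb.trans hge, mul_nonneg (mul_nonneg hTRd.le hspos.le) hxpos.le]
    have h2 : C0 - max G1 0 ≤ A * x := (mul_le_mul_iff_left₀ hxpos).mp h1
    have h3 : A * m ≤ A * x := by linarith [hAmdef]
    exact (mul_le_mul_iff_right₀ hApos).mp h3
  -- bounds on qs, xs
  have halε : al * ε1 ≤ |al| * ε1 := mul_le_mul_of_nonneg_right (le_abs_self al) hε1.le
  have halε' : -(|al| * ε1) ≤ al * ε1 := by
    have h := mul_le_mul_of_nonneg_right (neg_abs_le al) hε1.le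
    linarith
  have halN : |al| * ε1 ≤ N * ε1 := by
    apply mul_le_mul_of_nonneg_right _ hε1.le
    rw [hN]
    linarith [mul_nonneg hApos.le (abs_nonneg al), abs_nonneg G1, hTRd]
  have hqs1 : qs ≤ 1 := by rw [hqs]; linarith [halε', halN, hNε1q0']
  have hqs0 : 0 ≤ qs := by rw [hqs]; linarith [halε, halN, hNε1q0]
  have hqsxs : qs ≤ xs := by
    rw [hxs]; linarith [mul_nonneg (show (0:ℝ) ≤ 1 - qs by linarith) hspos.le]
  -- denominator lower bound
  have hAqseq : A * qs = C0 - A * (al * ε1) := by rw [hqs]; linear_combination hAq0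
  have hG1ε : G1 * ε1 ≤ |G1| * ε1 := mul_le_mul_of_nonneg_right (le_abs_self G1) hε1.le
  have hb1 : A * (|al| * ε1) + |G1| * ε1 + (T - R) * ε1 ≤ N * ε1 := by
    rw [hN]
    linarith [mul_nonneg hTRd.le hε1.le, mul_nonneg (abs_nonneg al) hε1.le, hε1.le]
  have hb2 : (T - R) * ε2 ≤ N * ε2 := by
    rw [hN]
    linarith [mul_nonneg hTRd.le hε2.le, mul_nonneg (mul_nonneg hApos.le (abs_nonneg al)) hε2.le,
      mul_nonneg (abs_nonneg G1) hε2.le, mul_nonneg (abs_nonneg al) hε2.le, hε2.le]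
  have hTRs_eq : (T - R) * s = (T - R) * ε1 + (T - R) * ε2 := by rw [hs]; ring
  have hD'low : A * m / 2 ≤ A * (x + xs) - (C0 + (T - R) * s) - G1 * ε1 := by
    have hAx : A * m ≤ A * x := mul_le_mul_of_nonneg_left hxm hApos.le
    have hAxs : A * qs ≤ A * xs := mul_le_mul_of_nonneg_left hqsxs hApos.le
    have hAal : A * (al * ε1) ≤ A * (|al| * ε1) := mul_le_mul_of_nonneg_left halε hApos.le
    linarith [hAx, hAxs, hAqseq, hAal, hG1ε, hb1, hb2, hNε1m, hNε2m, hTRs_eq]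
  have hDlow : A * m / 4 ≤ (1 - s) * (A * (x + xs) - (C0 + (T - R) * s) - G1 * ε1) := by
    have hw : 0 ≤ (1 - s - 1/2) * (A * (x + xs) - (C0 + (T - R) * s) - G1 * ε1) :=
      mul_nonneg (by linarith) (by linarith)
    linarith [hw, hD'low]
  -- the key linear identity
  have hlin : (qgreen - qs) * ((1 - s) * (A * (x + xs) - (C0 + (T - R) * s) - G1 * ε1))
      = -(A * xs ^ 2 - (C0 + (T - R) * s) * xs + G1 * ε1 * (1 - qs) * (1 - s)) := by
    have hE2 := hE
    rw [hx] at hE2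
    rw [hx, hxs]
    linear_combination hE2
  -- the Taylor decomposition of F(q*)
  have hFqs : A * xs ^ 2 - (C0 + (T - R) * s) * xs + G1 * ε1 * (1 - qs) * (1 - s)
      = C0 * al * ε1 * s + A * dl ^ 2 - (T - R) * s * dl + G1 * al * ε1 ^ 2
        - G1 * ε1 * s * (1 - q0) - G1 * al * ε1 ^ 2 * s := by
    have hFA : A * (A * xs ^ 2 - (C0 + (T - R) * s) * xs + G1 * ε1 * (1 - qs) * (1 - s))
        = A * (C0 * al * ε1 * s + A * dl ^ 2 - (T - R) * s * dl + G1 * al * ε1 ^ 2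
          - G1 * ε1 * s * (1 - q0) - G1 * al * ε1 ^ 2 * s) := by
      rw [hxs, hqs, hdl]
      linear_combination (A * (q0 + 2 * (-(al * ε1) + (1 - q0) * s + al * ε1 * s) - s)
          - ε1 * G1) * hAq0 + (A * s * q0 + ε1 * G1) * hACT - ε1 * halrel
    exact mul_left_cancel₀ hApos.ne' hFA
  -- term bounds
  have h_e1s : ε1 * s = ε1 * ε1 + ε1 * ε2 := by rw [hs]; ring
  have he1s32 : ε1 * s ≤ (3/2) * (ε1 ^ 2 + ε2 ^ 2) := by
    linarith [h_e1s, sq_nonneg (ε1 - ε2), sq_nonneg ε2]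
  have he1snn : (0:ℝ) ≤ ε1 * s := mul_nonneg hε1.le hspos.le
  have ha1 : al * (ε1 * s) ≤ |al| * (ε1 * s) := mul_le_mul_of_nonneg_right (le_abs_self al) he1snn
  have ha1' : -(|al| * (ε1 * s)) ≤ al * (ε1 * s) := by
    have h := mul_le_mul_of_nonneg_right (neg_abs_le al) he1snn; linarith
  have ha2 : |al| * (ε1 * s) ≤ |al| * ((3/2) * (ε1 ^ 2 + ε2 ^ 2)) :=
    mul_le_mul_of_nonneg_left he1s32 (abs_nonneg al)
  have ht1ub : C0 * al * ε1 * s ≤ 2 * C0 * |al| * (ε1 ^ 2 + ε2 ^ 2) := by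
    linarith [mul_le_mul_of_nonneg_left (ha1.trans ha2) hC0pos.le,
      mul_nonneg (mul_nonneg hC0pos.le (abs_nonneg al)) hR2nn]
  have ht1lb : -(2 * C0 * |al| * (ε1 ^ 2 + ε2 ^ 2)) ≤ C0 * al * ε1 * s := by
    have h' : -(|al| * ((3/2) * (ε1 ^ 2 + ε2 ^ 2))) ≤ al * (ε1 * s) := by linarith [ha1', ha2]
    linarith [mul_le_mul_of_nonneg_left h' hC0pos.le,
      mul_nonneg (mul_nonneg hC0pos.le (abs_nonneg al)) hR2nn]
  -- dl bounds
  have hq0s : (1 - q0) * s ≤ s := by linarith [mul_nonneg hq0pos.le hspos.le]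
  have hq0snn : 0 ≤ (1 - q0) * s := mul_nonneg (by linarith) hspos.le
  have he1s1 : ε1 * s ≤ ε1 := by linarith [mul_le_mul_of_nonneg_left hs2 hε1.le, hε1.le]
  have hals1 : al * ε1 * s ≤ |al| * ε1 := by
    have h2 : |al| * (ε1 * s) ≤ |al| * ε1 := mul_le_mul_of_nonneg_left he1s1 (abs_nonneg al)
    linarith [ha1, h2]
  have hals2 : -(|al| * ε1) ≤ al * ε1 * s := by
    have h2 : |al| * (ε1 * s) ≤ |al| * ε1 := mul_le_mul_of_nonneg_left he1s1 (abs_nonneg al)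
    linarith [ha1', h2]
  have halε2nn : 0 ≤ |al| * ε2 := mul_nonneg (abs_nonneg al) hε2.le
  have hdlub : dl ≤ (1 + |al|) * (2 * ε1 + ε2) := by
    rw [hdl]
    have h1 : (1 - q0) * s ≤ ε1 + ε2 := by rw [hs] at hq0s ⊢; linarith [hq0s]
    linarith [halε', hals1, halε2nn, hε1.le, h1]
  have hdllb : -((1 + |al|) * (2 * ε1 + ε2)) ≤ dl := by
    rw [hdl]
    linarith [halε, hals2, halε2nn, hε1.le, hε2.le, hq0snn]
  have hBsq : (2 * ε1 + ε2) ^ 2 ≤ 6 * (ε1 ^ 2 + ε2 ^ 2) := by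
    linarith [sq_nonneg (ε1 - ε2), sq_nonneg ε2]
  have hdl2 : dl ^ 2 ≤ (1 + |al|) ^ 2 * (6 * (ε1 ^ 2 + ε2 ^ 2)) := by
    have h1 : dl ^ 2 ≤ ((1 + |al|) * (2 * ε1 + ε2)) ^ 2 := by
      linarith [mul_nonneg (by linarith [hdlub] : (0:ℝ) ≤ (1 + |al|) * (2 * ε1 + ε2) - dl)
        (by linarith [hdllb] : (0:ℝ) ≤ (1 + |al|) * (2 * ε1 + ε2) + dl)]
    have h2 : ((1 + |al|) * (2 * ε1 + ε2)) ^ 2 ≤ (1 + |al|) ^ 2 * (6 * (ε1 ^ 2 + ε2 ^ 2)) := by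
      linarith [mul_le_mul_of_nonneg_left hBsq (sq_nonneg (1 + |al|))]
    linarith
  have ht2ub : A * dl ^ 2 ≤ 6 * A * (1 + |al|) ^ 2 * (ε1 ^ 2 + ε2 ^ 2) := by
    linarith [mul_le_mul_of_nonneg_left hdl2 hApos.le]
  have ht2lb : 0 ≤ A * dl ^ 2 := mul_nonneg hApos.le (sq_nonneg dl)
  -- (T-R)*s*dl bounds
  have hquad : (0:ℝ) ≤ 2 * ε1 ^ 2 + 3 * ε2 ^ 2 - 3 * ε1 * ε2 := by
    linarith [sq_nonneg (ε1 - ε2), sq_nonneg ε1, sq_nonneg ε2]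
  have hsB : s * ((1 + |al|) * (2 * ε1 + ε2)) ≤ 4 * (1 + |al|) * (ε1 ^ 2 + ε2 ^ 2) := by
    rw [hs]
    linarith [hquad, mul_nonneg (abs_nonneg al) hquad]
  have hsdl_ub : s * dl ≤ s * ((1 + |al|) * (2 * ε1 + ε2)) :=
    mul_le_mul_of_nonneg_left hdlub hspos.le
  have hsdl_lb : s * -((1 + |al|) * (2 * ε1 + ε2)) ≤ s * dl :=
    mul_le_mul_of_nonneg_left hdllb hspos.le
  have ht3ub : (T - R) * s * dl ≤ 4 * (T - R) * (1 + |al|) * (ε1 ^ 2 + ε2 ^ 2) := by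
    linarith [mul_le_mul_of_nonneg_left (hsdl_ub.trans hsB) hTRd.le]
  have ht3lb : -(4 * (T - R) * (1 + |al|) * (ε1 ^ 2 + ε2 ^ 2)) ≤ (T - R) * s * dl := by
    linarith [mul_le_mul_of_nonneg_left hsdl_lb hTRd.le,
      mul_le_mul_of_nonneg_left hsB hTRd.le]
  -- G1*al*ε1^2 bounds
  have hGa : G1 * al ≤ |G1| * |al| := by
    have h := le_abs_self (G1 * al); rw [abs_mul] at h; exact h
  have hGa' : -(|G1| * |al|) ≤ G1 * al := by
    have h := neg_abs_le (G1 * al); rw [abs_mul] at h; exact h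
  have ht4ub : G1 * al * ε1 ^ 2 ≤ |G1| * |al| * (ε1 ^ 2 + ε2 ^ 2) := by
    linarith [mul_le_mul_of_nonneg_right hGa (sq_nonneg ε1),
      mul_nonneg (mul_nonneg (abs_nonneg G1) (abs_nonneg al)) (sq_nonneg ε2)]
  have ht4lb : -(|G1| * |al| * (ε1 ^ 2 + ε2 ^ 2)) ≤ G1 * al * ε1 ^ 2 := by
    linarith [mul_le_mul_of_nonneg_right hGa' (sq_nonneg ε1),
      mul_nonneg (mul_nonneg (abs_nonneg G1) (abs_nonneg al)) (sq_nonneg ε2)]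
  -- G1*al*ε1^2*s bounds
  have he12s_nn : 0 ≤ ε1 ^ 2 * s := mul_nonneg (sq_nonneg ε1) hspos.le
  have he12s : ε1 ^ 2 * s ≤ ε1 ^ 2 + ε2 ^ 2 := by
    linarith [mul_le_mul_of_nonneg_left hs2 (sq_nonneg ε1), sq_nonneg ε2, sq_nonneg ε1]
  have ht6ub : G1 * al * ε1 ^ 2 * s ≤ |G1| * |al| * (ε1 ^ 2 + ε2 ^ 2) := by
    linarith [mul_le_mul_of_nonneg_right hGa he12s_nn,
      mul_le_mul_of_nonneg_left he12s (mul_nonneg (abs_nonneg G1) (abs_nonneg al))]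
  have ht6lb : -(|G1| * |al| * (ε1 ^ 2 + ε2 ^ 2)) ≤ G1 * al * ε1 ^ 2 * s := by
    linarith [mul_le_mul_of_nonneg_right hGa' he12s_nn,
      mul_le_mul_of_nonneg_left he12s (mul_nonneg (abs_nonneg G1) (abs_nonneg al))]
  -- G1*ε1*s*(1-q0) bounds
  have hx5nn : 0 ≤ ε1 * s * (1 - q0) :=
    mul_nonneg (mul_nonneg hε1.le hspos.le) (by linarith)
  have hx5 : ε1 * s * (1 - q0) ≤ 2 * (ε1 ^ 2 + ε2 ^ 2) := by
    linarith [he1s32, mul_nonneg (mul_nonneg hε1.le hspos.le) hq0pos.le, hR2nn]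
  have ht5ub : G1 * ε1 * s * (1 - q0) ≤ 2 * |G1| * (ε1 ^ 2 + ε2 ^ 2) := by
    linarith [mul_le_mul_of_nonneg_right (le_abs_self G1) hx5nn,
      mul_le_mul_of_nonneg_left hx5 (abs_nonneg G1)]
  have ht5lb : -(2 * |G1| * (ε1 ^ 2 + ε2 ^ 2)) ≤ G1 * ε1 * s * (1 - q0) := by
    linarith [mul_le_mul_of_nonneg_right (neg_abs_le G1) hx5nn,
      mul_le_mul_of_nonneg_left hx5 (abs_nonneg G1)]
  -- assembling the bound on F(q*)
  have hMexp : M * (ε1 ^ 2 + ε2 ^ 2)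
      = 2 * C0 * |al| * (ε1 ^ 2 + ε2 ^ 2) + 6 * A * (1 + |al|) ^ 2 * (ε1 ^ 2 + ε2 ^ 2)
        + 4 * (T - R) * (1 + |al|) * (ε1 ^ 2 + ε2 ^ 2) + |G1| * |al| * (ε1 ^ 2 + ε2 ^ 2)
        + 2 * |G1| * (ε1 ^ 2 + ε2 ^ 2) + |G1| * |al| * (ε1 ^ 2 + ε2 ^ 2) + (ε1 ^ 2 + ε2 ^ 2) := by
    rw [hM]; ring
  have hFub : A * xs ^ 2 - (C0 + (T - R) * s) * xs + G1 * ε1 * (1 - qs) * (1 - s)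
      ≤ M * (ε1 ^ 2 + ε2 ^ 2) := by
    rw [hFqs]
    linarith [ht1ub, ht2ub, ht3lb, ht4ub, ht5lb, ht6lb, hMexp, hR2nn]
  have hFlb : -(M * (ε1 ^ 2 + ε2 ^ 2))
      ≤ A * xs ^ 2 - (C0 + (T - R) * s) * xs + G1 * ε1 * (1 - qs) * (1 - s) := by
    rw [hFqs]
    linarith [ht1lb, ht2lb, ht3ub, ht4lb, ht5ub, ht6ub, hMexp, hR2nn]
  -- finish
  have hKM : 4 * M / (A * m) * (A * m / 4) = M := by
    field_simp
  have hKMR2 : 4 * M / (A * m) * (A * m / 4) * (ε1 ^ 2 + ε2 ^ 2) = M * (ε1 ^ 2 + ε2 ^ 2) := by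
    rw [hKM]
  have hKR2nn : 0 ≤ 4 * M / (A * m) * (ε1 ^ 2 + ε2 ^ 2) := mul_nonneg hKpos.le hR2nn
  have hAm4 : (0:ℝ) < A * m / 4 := div_pos hAmpos (by norm_num)
  have h_upper : qgreen - qs ≤ 4 * M / (A * m) * (ε1 ^ 2 + ε2 ^ 2) := by
    by_contra hcon
    push_neg at hcon
    have hu0 : 0 < qgreen - qs := lt_of_le_of_lt hKR2nn hcon
    have p1 : (qgreen - qs) * (A * m / 4)
        ≤ (qgreen - qs) * ((1 - s) * (A * (x + xs) - (C0 + (T - R) * s) - G1 * ε1)) :=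
      mul_le_mul_of_nonneg_left hDlow hu0.le
    have p2 : 4 * M / (A * m) * (ε1 ^ 2 + ε2 ^ 2) * (A * m / 4) < (qgreen - qs) * (A * m / 4) :=
      mul_lt_mul_of_pos_right hcon hAm4
    linarith [hlin, hFlb, p1, p2, hKMR2]
  have h_lower : -(4 * M / (A * m) * (ε1 ^ 2 + ε2 ^ 2)) ≤ qgreen - qs := by
    by_contra hcon
    push_neg at hcon
    have hu0 : qgreen - qs ≤ 0 := by linarith [hKR2nn]
    have p1 : (qgreen - qs) * ((1 - s) * (A * (x + xs) - (C0 + (T - R) * s) - G1 * ε1))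
        ≤ (qgreen - qs) * (A * m / 4) :=
      mul_le_mul_of_nonpos_left hDlow hu0
    have p2 : (qgreen - qs) * (A * m / 4) < -(4 * M / (A * m) * (ε1 ^ 2 + ε2 ^ 2)) * (A * m / 4) :=
      mul_lt_mul_of_pos_right hcon hAm4
    linarith [hlin, hFub, p1, p2, hKMR2]
  have hWeq : qgreen - (2 * R - S - T) / (R - S)
      + ((R - T) + (P - S)) * (T - R) * ε1 / ((R - S) * (2 * R - S - T))
      = qgreen - qs := by
    rw [hqs, hal, hq0, hA, hC0, hG1]
    ring
  rw [hWeq]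
  exact abs_le.mpr ⟨h_lower, h_upper⟩
end

section
/- There exists r0>0 such that for all ε1,ε2>0 with √(ε1²+ε2²)<r0, with q_green the unique root in (0,1) of a13(q)=R, q_red the unique zero in (0,1) of μ(q)=a13(q)−P−q(T−P), and q_blue=(R−P)/(T−P): (i) if G1=0 then q_green = q_blue = q_red; (ii) if G1<0 then q_green < q_blue < q_red; (iii) if G1>0 then q_green > q_blue > q_red. -/
/-- The function `μ(q) = a13(q) − P − q(T−P)`. -/
noncomputable def mu (T R P S ε1 ε2 q : ℝ) : ℝ :=
  a13 T R P S ε1 ε2 q - P - q * (T - P)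

lemma a13_key (T R P S ε1 ε2 q : ℝ)
    (hx : q + (1 - q) * (ε1 + ε2) ≠ 0) (hd : 1 - ε1 - ε2 ≠ 0) :
    (a13 T R P S ε1 ε2 q - R) * ((q + (1 - q) * (ε1 + ε2)) ^ 2 * (1 - ε1 - ε2))
      = ε1 * ((q + (1 - q) * (ε1 + ε2)) * (((T - P) * q - (R - P)) * (1 - (ε1 + ε2)))
          - ((R - T) + (P - S)) * ((1 - (q + (1 - q) * (ε1 + ε2))) *
              ((q + (1 - q) * (ε1 + ε2)) - ε1))) := by
  unfold a13
  field_simp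
  ring

lemma mu_key (T R P S ε1 ε2 q : ℝ)
    (hx : q + (1 - q) * (ε1 + ε2) ≠ 0) (hd : 1 - ε1 - ε2 ≠ 0) :
    mu T R P S ε1 ε2 q * ((q + (1 - q) * (ε1 + ε2)) ^ 2 * (1 - ε1 - ε2))
      = ((q + (1 - q) * (ε1 + ε2)) - ε1) *
          (-((q + (1 - q) * (ε1 + ε2)) * (((T - P) * q - (R - P)) * (1 - (ε1 + ε2))))
            - ((R - T) + (P - S)) * (ε1 * (1 - (q + (1 - q) * (ε1 + ε2))))) := by
  unfold mu a13
  field_simp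
  ring

/-- sign transfer: if `D * p1 = G * p2` with `p1, p2 > 0`, then `D` has the sign of `G`. -/
lemma trich (G D p1 p2 : ℝ) (hp1 : 0 < p1) (hp2 : 0 < p2) (hE : D * p1 = G * p2) :
    (G = 0 → D = 0) ∧ (G < 0 → D < 0) ∧ (G > 0 → D > 0) := by
  refine ⟨fun h => ?_, fun h => ?_, fun h => ?_⟩
  · have h0 : D * p1 = 0 := by rw [hE, h, zero_mul]
    exact (mul_eq_zero.mp h0).resolve_right hp1.ne'
  · have hlt : D * p1 < 0 := hE ▸ mul_neg_of_neg_of_pos h hp2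
    nlinarith
  · have hgt : 0 < D * p1 := hE ▸ mul_pos h hp2
    nlinarith

theorem stmt_14 (T R P S : ℝ) (hTR : T > R) (hRP : R > P) (hPS : P > S)
    (hlow : P < (S + T) / 2) (hup : (S + T) / 2 < R) :
    ∃ r0 : ℝ, 0 < r0 ∧
      ∀ ε1 ε2 : ℝ, 0 < ε1 → 0 < ε2 → Real.sqrt (ε1 ^ 2 + ε2 ^ 2) < r0 →
        ∀ qgreen ∈ Set.Ioo (0 : ℝ) 1, a13 T R P S ε1 ε2 qgreen = R →
          ∀ qred ∈ Set.Ioo (0 : ℝ) 1, mu T R P S ε1 ε2 qred = 0 →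
            (((R - T) + (P - S) = 0) →
              qgreen = (R - P) / (T - P) ∧ (R - P) / (T - P) = qred) ∧
            (((R - T) + (P - S) < 0) →
              qgreen < (R - P) / (T - P) ∧ (R - P) / (T - P) < qred) ∧
            (((R - T) + (P - S) > 0) →
              qgreen > (R - P) / (T - P) ∧ (R - P) / (T - P) > qred) := by
  refine ⟨1 / 2, by norm_num, ?_⟩
  intro ε1 ε2 hε1 hε2 hr qg hqg hga qr hqr hmr
  obtain ⟨hqg0, hqg1⟩ := hqg
  obtain ⟨hqr0, hqr1⟩ := hqr
  have hTP : (0:ℝ) < T - P := by linarith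
  -- smallness: ε1 + ε2 < 1
  have hsq : ε1 ^ 2 + ε2 ^ 2 < 1 / 4 := by
    have h1 := Real.sq_sqrt (by positivity : (0:ℝ) ≤ ε1 ^ 2 + ε2 ^ 2)
    nlinarith [Real.sqrt_nonneg (ε1 ^ 2 + ε2 ^ 2)]
  have hsum : ε1 + ε2 < 1 := by nlinarith [sq_nonneg (ε1 - ε2), sq_nonneg (ε1 + ε2)]
  have hd : (0:ℝ) < 1 - ε1 - ε2 := by linarith
  have hs1 : (0:ℝ) < 1 - (ε1 + ε2) := by linarith
  -- facts about x for a root q ∈ (0,1)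
  have xfacts : ∀ q : ℝ, 0 < q → q < 1 →
      0 < q + (1 - q) * (ε1 + ε2) ∧ q + (1 - q) * (ε1 + ε2) < 1 ∧
        ε1 < q + (1 - q) * (ε1 + ε2) := by
    intro q h0 h1
    have h1q : (0:ℝ) < 1 - q := by linarith
    have hm : 0 < (1 - q) * (ε1 + ε2) := mul_pos h1q (by linarith)
    have hm2 : 0 < q * (1 - (ε1 + ε2)) := mul_pos h0 hs1
    refine ⟨by linarith, by nlinarith, by nlinarith⟩
  -- green root
  obtain ⟨hxg0, hxg1, hxgε⟩ := xfacts qg hqg0 hqg1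
  have hEg0 := a13_key T R P S ε1 ε2 qg hxg0.ne' hd.ne'
  rw [hga, sub_self, zero_mul] at hEg0
  have hFg : (qg + (1 - qg) * (ε1 + ε2)) * (((T - P) * qg - (R - P)) * (1 - (ε1 + ε2)))
      = ((R - T) + (P - S)) * ((1 - (qg + (1 - qg) * (ε1 + ε2))) *
          ((qg + (1 - qg) * (ε1 + ε2)) - ε1)) := by
    rcases mul_eq_zero.mp hEg0.symm with h | h
    · exact absurd h hε1.ne'
    · linarith
  have hEg : ((T - P) * qg - (R - P)) * ((qg + (1 - qg) * (ε1 + ε2)) * (1 - (ε1 + ε2)))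
      = ((R - T) + (P - S)) * ((1 - (qg + (1 - qg) * (ε1 + ε2))) *
          ((qg + (1 - qg) * (ε1 + ε2)) - ε1)) := by linarith [hFg]
  have tg := trich ((R - T) + (P - S)) ((T - P) * qg - (R - P))
      ((qg + (1 - qg) * (ε1 + ε2)) * (1 - (ε1 + ε2)))
      ((1 - (qg + (1 - qg) * (ε1 + ε2))) * ((qg + (1 - qg) * (ε1 + ε2)) - ε1))
      (mul_pos hxg0 hs1) (mul_pos (by linarith) (by linarith)) hEg
  -- red root
  obtain ⟨hxr0, hxr1, hxrε⟩ := xfacts qr hqr0 hqr1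
  have hEr0 := mu_key T R P S ε1 ε2 qr hxr0.ne' hd.ne'
  rw [hmr, zero_mul] at hEr0
  have hFr : -((qr + (1 - qr) * (ε1 + ε2)) * (((T - P) * qr - (R - P)) * (1 - (ε1 + ε2))))
      - ((R - T) + (P - S)) * (ε1 * (1 - (qr + (1 - qr) * (ε1 + ε2)))) = 0 := by
    rcases mul_eq_zero.mp hEr0.symm with h | h
    · exact absurd h (by linarith)
    · exact h
  have hEr : ((T - P) * qr - (R - P)) * ((qr + (1 - qr) * (ε1 + ε2)) * (1 - (ε1 + ε2)))
      = (-((R - T) + (P - S))) * (ε1 * (1 - (qr + (1 - qr) * (ε1 + ε2)))) := by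
    linarith [hFr]
  have tr := trich (-((R - T) + (P - S))) ((T - P) * qr - (R - P))
      ((qr + (1 - qr) * (ε1 + ε2)) * (1 - (ε1 + ε2)))
      (ε1 * (1 - (qr + (1 - qr) * (ε1 + ε2))))
      (mul_pos hxr0 hs1) (mul_pos hε1 (by linarith)) hEr
  -- conclude
  refine ⟨fun h => ?_, fun h => ?_, fun h => ?_⟩
  · have h1 := tg.1 h
    have h2 := tr.1 (by linarith)
    constructor
    · rw [eq_div_iff hTP.ne']; linarith
    · rw [eq_comm, eq_div_iff hTP.ne']; linarith
  · have h1 := tg.2.1 h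
    have h2 := tr.2.2 (by linarith)
    constructor
    · rw [lt_div_iff₀ hTP]; linarith
    · rw [div_lt_iff₀ hTP]; linarith
  · have h1 := tg.2.2 h
    have h2 := tr.2.1 (by linarith)
    constructor
    · rw [gt_iff_lt, div_lt_iff₀ hTP]; linarith
    · rw [gt_iff_lt, lt_div_iff₀ hTP]; linarith
end
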